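/- The power series Ω(t) is transcendental over K̄(t): viewing K̄(t) as a subfield of the Laurent series field K̄_∞((t)) (via Laurent expansion at t = 0), Ω is not a root of any nonzero polynomial with coefficients in K̄(t). -/

import Mathlib

/-!
Common setup: the function field `K = 𝔽_q(θ)`, its completion
`K_∞ = 𝔽_q((1/θ))` at the infinite place (realized as Laurent series in the
variable `X = θ⁻¹`), a fixed algebraic closure `K̄_∞` of `K_∞`, the algebraic
closure `K̄` of `K` inside `K̄_∞`, the `∞`-adic absolute value, multizeta
values, Carlitz (multiple) polylogarithms and the Carlitz period `π̃`.
-/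

open Filter
open scoped Classical

noncomputable section

namespace MZV

/-- Unconditional (unordered) convergence of the sum of the family `f` to `L`,
with respect to an absolute-value function `v`. -/
def HasSumAbs {M ι : Type*} [AddCommGroup M] (v : M → ℝ) (f : ι → M) (L : M) : Prop :=
  ∀ ε : ℝ, 0 < ε → ∃ s : Finset ι, ∀ t : Finset ι, s ⊆ t → v (∑ i ∈ t, f i - L) < ε

/-- Convergence of a sequence to `L` with respect to an absolute-value
function `v`. -/
def TendstoAbs {M : Type*} [AddCommGroup M] (v : M → ℝ) (f : ℕ → M) (L : M) : Prop :=
  Tendsto (fun n => v (f n - L)) atTop (nhds 0)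

/-- The index set of "consecutive segments" `(ℓ, k)`, `0 ≤ ℓ ≤ k ≤ d - 1`
(in the notation of the paper, `I_d = {(i,j) : 1 ≤ j < i ≤ d+1}` via
`(ℓ, k) = (j - 1, i - 2)`); it has `d(d+1)/2` elements. -/
def Seg (d : ℕ) : Type := {p : ℕ × ℕ // p.1 ≤ p.2 ∧ p.2 < d}

/-- The segment `(x_ℓ, x_{ℓ+1}, …, x_k)` of a `d`-tuple `x`, for a segment
`s = (ℓ, k) ∈ Seg d`. -/
def segFam {γ : Type*} {d : ℕ} (x : Fin d → γ) (s : Seg d) :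
    Fin (s.1.2 - s.1.1 + 1) → γ :=
  fun i => x ⟨s.1.1 + i.1, by have h1 := i.2; have h2 := s.2.1; have h3 := s.2.2; omega⟩

/-- Index type for the sums defining multiple polylogarithms: strictly
decreasing tuples `i_1 > i_2 > ⋯ > i_m ≥ 0` of natural numbers. -/
def DecTuple (m : ℕ) : Type :=
  {i : Fin m → ℕ // ∀ a b : Fin m, a < b → i b < i a}

variable (Fq : Type) [Field Fq] [Fintype Fq]

/-- `q`, the cardinality of the constant field `𝔽_q`. -/
def q : ℕ := Fintype.card Fq

/-- `K_∞ = 𝔽_q((1/θ))`, realized as the field of Laurent series in the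
variable `X = θ⁻¹`.  The field `K = 𝔽_q(θ) = 𝔽_q(θ⁻¹)` is its subfield
`RatFunc 𝔽_q` (rational functions in `X = θ⁻¹`). -/
abbrev Kinf := LaurentSeries Fq

/-- The element `θ ∈ K_∞` (the inverse of the Laurent-series variable). -/
def theta : Kinf Fq := (HahnSeries.single (1 : ℤ) (1 : Fq))⁻¹

/-- The `∞`-adic absolute value on `K_∞`, normalized by `|θ|_∞ = q`. -/
def absK (f : Kinf Fq) : ℝ :=
  if f = 0 then 0 else (q Fq : ℝ) ^ (-(HahnSeries.order f))

/-- A fixed algebraic closure `K̄_∞` of `K_∞`. -/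
abbrev Kbinf := AlgebraicClosure (Kinf Fq)

instance : Algebra (RatFunc Fq) (Kbinf Fq) :=
  ((algebraMap (Kinf Fq) (Kbinf Fq)).comp (@algebraMap (RatFunc Fq) (Kinf Fq) _ _ (RatFunc.liftAlgebra Fq (Kinf Fq)))).toAlgebra

/-- `K̄`, the algebraic closure of `K = 𝔽_q(θ)` inside `K̄_∞` (the elements of
`K̄_∞` algebraic, equivalently integral, over `K`). -/
def Kbar : Subalgebra (RatFunc Fq) (Kbinf Fq) := integralClosure (RatFunc Fq) (Kbinf Fq)

/-- `θ` viewed inside `K̄_∞`. -/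
def thetaB : Kbinf Fq := algebraMap (Kinf Fq) (Kbinf Fq) (theta Fq)

/-- The `N`-th partial product of
`∏_{i=1}^∞ (1 − θ^{1−q^i})⁻¹ ∈ K_∞`; its limit `P` enters the Carlitz period
`π̃ = (−θ)^{q/(q−1)} · P`. -/
def piTildePartial (N : ℕ) : Kinf Fq :=
  ∏ i ∈ Finset.range N, (1 - theta Fq ^ ((1 : ℤ) - (q Fq : ℤ) ^ (i + 1)))⁻¹

/-- Index type for multizeta sums: `m`-tuples of monic polynomials in
`𝔽_q[θ]` with strictly decreasing degrees, `deg a_1 > ⋯ > deg a_m ≥ 0`. -/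
def MonicDec (m : ℕ) : Type :=
  {a : Fin m → Polynomial Fq //
    (∀ i, (a i).Monic) ∧ ∀ i j : Fin m, i < j → (a j).degree < (a i).degree}

/-- The term `1/(a_1(θ)^{n_1} ⋯ a_m(θ)^{n_m})` of the multizeta sum. -/
def mzvTerm (m : ℕ) (nn : Fin m → ℕ) (a : MonicDec Fq m) : Kinf Fq :=
  (∏ i, Polynomial.aeval (theta Fq) (a.1 i) ^ nn i)⁻¹

/-- `z = ζ(n_1, …, n_m)`: the multizeta value, an unconditionally convergent
sum in `K_∞`. -/
def IsMZV (m : ℕ) (nn : Fin m → ℕ) (z : Kinf Fq) : Prop :=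
  HasSumAbs (absK Fq) (mzvTerm Fq m nn) z

/-- `D_i = (θ − θ^q)(θ − θ^{q²}) ⋯ (θ − θ^{q^i}) ∈ K_∞`. -/
def Dfac (i : ℕ) : Kinf Fq :=
  ∏ s ∈ Finset.range i, (theta Fq - theta Fq ^ (q Fq) ^ (s + 1))

/-- The term `z_1^{q^{i_1}} ⋯ z_m^{q^{i_m}} / (D_{i_1}^{n_1} ⋯ D_{i_m}^{n_m})`
of the Carlitz multiple polylogarithm (for points of `K_∞`). -/
def cmplTerm (m : ℕ) (nn : Fin m → ℕ) (z : Fin m → Kinf Fq) (ii : DecTuple m) : Kinf Fq :=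
  ∏ j, (z j ^ (q Fq) ^ (ii.1 j) * ((Dfac Fq (ii.1 j)) ^ nn j)⁻¹)

/-- `L = Li_{n_1, …, n_m}(z_1, …, z_m)`, the value of the Carlitz multiple
polylogarithm at a point of `K_∞^m` (an unconditionally convergent sum in
`K_∞`). -/
def IsCMPL (m : ℕ) (nn : Fin m → ℕ) (z : Fin m → Kinf Fq) (L : Kinf Fq) : Prop :=
  HasSumAbs (absK Fq) (cmplTerm Fq m nn z) L

/-- The value `u^{(i)}(c) = Σ_j (coeff j of u)^{q^i} c^j` of the `i`-fold twist
of a polynomial `u`. -/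
def twistEval (u : Polynomial (Kbinf Fq)) (i : ℕ) (c : Kbinf Fq) : Kbinf Fq :=
  ∑ j ∈ Finset.range (u.natDegree + 1), u.coeff j ^ (q Fq) ^ i * c ^ j

/-- `(c − θ^q)(c − θ^{q²}) ⋯ (c − θ^{q^i}) ∈ K̄_∞`. -/
def DfacC (c : Kbinf Fq) (i : ℕ) : Kbinf Fq :=
  ∏ s ∈ Finset.range i, (c - thetaB Fq ^ (q Fq) ^ (s + 1))

/-- The term (at `t = c`) of the series `L_{𝕦,𝕟}`:
`u_1^{(i_1)}(c) ⋯ u_m^{(i_m)}(c) / (((c−θ^q)⋯(c−θ^{q^{i_1}}))^{n_1} ⋯ ((c−θ^q)⋯(c−θ^{q^{i_m}}))^{n_m})`. -/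
def LTermC (m : ℕ) (nn : Fin m → ℕ) (uu : Fin m → Polynomial (Kbinf Fq)) (c : Kbinf Fq)
    (ii : DecTuple m) : Kbinf Fq :=
  ∏ j, (twistEval Fq (uu j) (ii.1 j) c * ((DfacC Fq c (ii.1 j)) ^ nn j)⁻¹)

end MZV

namespace MZV

variable (Fq : Type) [Field Fq] [Fintype Fq]

/-- The `N`-th partial product of
`Ω(t) = (−θ)^{−q/(q−1)} ∏_{i=1}^∞ (1 − t/θ^{q^i}) ∈ K̄_∞[[t]]`, given the
chosen root `β = (−θ)^{1/(q−1)}` (so that `(−θ)^{−q/(q−1)} = (β^q)⁻¹`). -/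
def OmegaPartial (β : Kbinf Fq) (N : ℕ) : PowerSeries (Kbinf Fq) :=
  PowerSeries.C (β ^ q Fq)⁻¹ *
    ∏ i ∈ Finset.range N,
      (1 - PowerSeries.C ((thetaB Fq ^ (q Fq) ^ (i + 1))⁻¹) * PowerSeries.X)

/-- The field `K̄(t)`, viewed as the subfield of the Laurent series field
`K̄_∞((t))` generated by the constants from `K̄` and the variable `t`. -/
def KbarT : Subfield (LaurentSeries (Kbinf Fq)) :=
  Subfield.closure
    (((HahnSeries.C : Kbinf Fq →+* LaurentSeries (Kbinf Fq)) ''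
        (Kbar Fq : Set (Kbinf Fq))) ∪
      {HahnSeries.single (1 : ℤ) (1 : Kbinf Fq)})

instance : Algebra (KbarT Fq) (LaurentSeries (Kbinf Fq)) :=
  (KbarT Fq).subtype.toAlgebra

end MZV

namespace MZVAux
set_option linter.unusedSectionVars false
set_option synthInstance.maxHeartbeats 1000000
set_option maxHeartbeats 1600000

open MZV Polynomial

variable (Fq : Type) [Field Fq] [Fintype Fq]

/-- A Frobenius ring endomorphism `x ↦ x ^ q` of `K̄_∞`. -/
lemma exists_frob : ∃ φ : Kbinf Fq →+* Kbinf Fq, ∀ x, φ x = x ^ q Fq := by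
  have hp : Fact (Nat.Prime (ringChar Fq)) := ⟨CharP.char_is_prime Fq _⟩
  obtain ⟨n, hn, hcard⟩ := FiniteField.card Fq (ringChar Fq)
  haveI : CharP (Kinf Fq) (ringChar Fq) :=
    charP_of_injective_ringHom (HahnSeries.C_injective (Γ := ℤ) (R := Fq)) _
  exact ⟨iterateFrobenius (Kbinf Fq) (ringChar Fq) n,
    fun x => by rw [iterateFrobenius_def, q, hcard]⟩

variable {Fq}

/-- Coefficientwise ring endomorphism of the Laurent series field. -/
noncomputable def tauRH (φ : Kbinf Fq →+* Kbinf Fq) :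
    LaurentSeries (Kbinf Fq) →+* LaurentSeries (Kbinf Fq) where
  toFun x := x.map φ
  map_one' := HahnSeries.map_one φ.toMonoidWithZeroHom
  map_mul' x y := HahnSeries.map_mul (φ : Kbinf Fq →ₙ+* Kbinf Fq)
  map_zero' := by ext g; simp
  map_add' x y := by ext g; simp

@[simp] lemma tauRH_coeff (φ : Kbinf Fq →+* Kbinf Fq) (x : LaurentSeries (Kbinf Fq)) (g : ℤ) :
    (tauRH φ x).coeff g = φ (x.coeff g) := rfl

lemma tauRH_C (φ : Kbinf Fq →+* Kbinf Fq) (a : Kbinf Fq) :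
    tauRH φ (HahnSeries.C a) = HahnSeries.C (φ a) :=
  HahnSeries.map_C a φ

lemma tauRH_single_one (φ : Kbinf Fq →+* Kbinf Fq) :
    tauRH φ (HahnSeries.single (1 : ℤ) (1 : Kbinf Fq)) =
      HahnSeries.single (1 : ℤ) (1 : Kbinf Fq) := by
  ext g
  simp [HahnSeries.coeff_single]


/-- Embedding of polynomials into Laurent series. -/
noncomputable def EPoly (Fq : Type) [Field Fq] [Fintype Fq] :
    Polynomial (Kbinf Fq) →+* LaurentSeries (Kbinf Fq) :=
  (HahnSeries.ofPowerSeries ℤ (Kbinf Fq)).comp (Polynomial.coeToPowerSeries.ringHom)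

lemma EPoly_injective : Function.Injective (EPoly Fq) :=
  HahnSeries.ofPowerSeries_injective.comp (Polynomial.coe_injective (Kbinf Fq))

lemma EPoly_X : EPoly Fq Polynomial.X = HahnSeries.single (1 : ℤ) 1 := by
  simp [EPoly, RingHom.comp_apply, Polynomial.coeToPowerSeries.ringHom_apply,
    Polynomial.coe_X, HahnSeries.ofPowerSeries_X]

lemma EPoly_C (a : Kbinf Fq) : EPoly Fq (Polynomial.C a) = HahnSeries.C a := by
  simp [EPoly, RingHom.comp_apply, Polynomial.coeToPowerSeries.ringHom_apply,
    Polynomial.coe_C, HahnSeries.ofPowerSeries_C]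

lemma coe_ofPowerSeries_neg_coeff (f : PowerSeries (Kbinf Fq)) {g : ℤ} (hg : g < 0) :
    (HahnSeries.ofPowerSeries ℤ (Kbinf Fq) f).coeff g = 0 := by
  rw [HahnSeries.ofPowerSeries_apply]
  apply HahnSeries.embDomain_notin_range
  rintro ⟨n, hn⟩
  have h' : (n : ℤ) = g := hn
  omega

lemma tauRH_ofPowerSeries (φ : Kbinf Fq →+* Kbinf Fq) (f : PowerSeries (Kbinf Fq)) :
    tauRH φ (HahnSeries.ofPowerSeries ℤ (Kbinf Fq) f) =
      HahnSeries.ofPowerSeries ℤ (Kbinf Fq) (PowerSeries.map φ f) := by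
  ext g
  rcases le_or_gt 0 g with hg | hg
  · lift g to ℕ using hg
    rw [tauRH_coeff, HahnSeries.ofPowerSeries_apply_coeff, HahnSeries.ofPowerSeries_apply_coeff,
      PowerSeries.coeff_map]
  · rw [tauRH_coeff, coe_ofPowerSeries_neg_coeff f hg, coe_ofPowerSeries_neg_coeff _ hg, map_zero]

lemma tauRH_EPoly (φ : Kbinf Fq →+* Kbinf Fq) (P : Polynomial (Kbinf Fq)) :
    tauRH φ (EPoly Fq P) = EPoly Fq (P.map φ) := by
  have hcoe : ((P.map φ : Polynomial (Kbinf Fq)) : PowerSeries (Kbinf Fq)) =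
      PowerSeries.map φ (P : PowerSeries (Kbinf Fq)) := by
    ext k
    simp [Polynomial.coeff_coe, PowerSeries.coeff_map, Polynomial.coeff_map]
  simp only [EPoly, RingHom.comp_apply, Polynomial.coeToPowerSeries.ringHom_apply]
  rw [tauRH_ofPowerSeries, hcoe]


lemma thetaB_mem_Kbar (Fq : Type) [Field Fq] [Fintype Fq] : thetaB Fq ∈ Kbar Fq := by
  have hX : (@algebraMap (RatFunc Fq) (Kinf Fq) _ _ (RatFunc.liftAlgebra Fq (Kinf Fq))) RatFunc.X = HahnSeries.single (1 : ℤ) 1 :=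
    RatFunc.coe_X
  have h1 : theta Fq = @algebraMap (RatFunc Fq) (Kinf Fq) _ _ (RatFunc.liftAlgebra Fq (Kinf Fq)) (RatFunc.X)⁻¹ := by
    rw [map_inv₀, hX, theta]
  have h2 : thetaB Fq = algebraMap (RatFunc Fq) (Kbinf Fq) (RatFunc.X)⁻¹ := by
    rw [thetaB, h1]; rfl
  rw [h2]
  exact isIntegral_algebraMap

lemma single_mem_KbarT : HahnSeries.single (1 : ℤ) (1 : Kbinf Fq) ∈ KbarT Fq :=
  Subfield.subset_closure (Or.inr rfl)

lemma C_mem_KbarT {x : Kbinf Fq} (hx : x ∈ Kbar Fq) : HahnSeries.C x ∈ KbarT Fq :=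
  Subfield.subset_closure (Or.inl ⟨x, hx, rfl⟩)

lemma tau_mem_KbarT {φ : Kbinf Fq →+* Kbinf Fq} (hφ : ∀ x, φ x = x ^ q Fq)
    {x : LaurentSeries (Kbinf Fq)} (hx : x ∈ KbarT Fq) : tauRH φ x ∈ KbarT Fq := by
  have hx' : x ∈ Subfield.closure
      (((HahnSeries.C : Kbinf Fq →+* LaurentSeries (Kbinf Fq)) ''
        (Kbar Fq : Set (Kbinf Fq))) ∪
      {HahnSeries.single (1 : ℤ) (1 : Kbinf Fq)}) := hx
  clear hx
  induction hx' using Subfield.closure_induction with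
  | mem y hy =>
    rcases hy with ⟨z, hz, rfl⟩ | rfl
    · rw [tauRH_C]
      exact C_mem_KbarT (by rw [hφ]; exact pow_mem hz _)
    · rw [tauRH_single_one]
      exact single_mem_KbarT
  | one => rw [map_one]; exact one_mem _
  | add a b _ _ iha ihb => rw [map_add]; exact add_mem iha ihb
  | neg a _ iha => rw [map_neg]; exact neg_mem iha
  | inv a _ iha => rw [map_inv₀]; exact inv_mem iha
  | mul a b _ _ iha ihb => rw [map_mul]; exact mul_mem iha ihb

lemma mem_rep {x : LaurentSeries (Kbinf Fq)} (hx : x ∈ KbarT Fq) :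
    ∃ P Q : Polynomial (Kbinf Fq), Q ≠ 0 ∧ x = EPoly Fq P / EPoly Fq Q := by
  have hEne : ∀ Q : Polynomial (Kbinf Fq), Q ≠ 0 → EPoly Fq Q ≠ 0 := fun Q h h0 =>
    h (EPoly_injective (by rw [h0, map_zero]))
  have hx' : x ∈ Subfield.closure
      (((HahnSeries.C : Kbinf Fq →+* LaurentSeries (Kbinf Fq)) ''
        (Kbar Fq : Set (Kbinf Fq))) ∪
      {HahnSeries.single (1 : ℤ) (1 : Kbinf Fq)}) := hx
  clear hx
  induction hx' using Subfield.closure_induction with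
  | mem y hy =>
    rcases hy with ⟨z, hz, rfl⟩ | rfl
    · refine ⟨Polynomial.C z, 1, one_ne_zero, ?_⟩
      rw [EPoly_C, (EPoly Fq).map_one, div_one]
    · refine ⟨Polynomial.X, 1, one_ne_zero, ?_⟩
      rw [EPoly_X, (EPoly Fq).map_one, div_one]
  | one => exact ⟨1, 1, one_ne_zero, by simp⟩
  | add a b ha hb iha ihb =>
    obtain ⟨P1, Q1, h1, e1⟩ := iha
    obtain ⟨P2, Q2, h2, e2⟩ := ihb
    exact ⟨P1 * Q2 + P2 * Q1, Q1 * Q2, mul_ne_zero h1 h2, by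
      rw [e1, e2, div_add_div _ _ (hEne _ h1) (hEne _ h2), map_mul, map_add, map_mul, map_mul]
      ring⟩
  | neg a ha iha =>
    obtain ⟨P, Q, h, e⟩ := iha
    exact ⟨-P, Q, h, by rw [e, map_neg]; ring⟩
  | inv a ha iha =>
    obtain ⟨P, Q, h, e⟩ := iha
    by_cases ha0 : a = 0
    · exact ⟨0, 1, one_ne_zero, by simp [ha0]⟩
    · have hP : P ≠ 0 := by
        rintro rfl
        rw [map_zero, zero_div] at e
        exact ha0 e
      exact ⟨Q, P, hP, by rw [e, inv_div]⟩
  | mul a b ha hb iha ihb =>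
    obtain ⟨P1, Q1, h1, e1⟩ := iha
    obtain ⟨P2, Q2, h2, e2⟩ := ihb
    exact ⟨P1 * P2, Q1 * Q2, mul_ne_zero h1 h2, by
      rw [e1, e2, div_mul_div_comm, map_mul, map_mul]⟩


lemma v_lim_unique (v : AbsoluteValue (Kbinf Fq) ℝ) (a : ℕ → Kbinf Fq) {L1 L2 : Kbinf Fq}
    (h1 : Filter.Tendsto (fun N => v (a N - L1)) Filter.atTop (nhds 0))
    (h2 : Filter.Tendsto (fun N => v (a N - L2)) Filter.atTop (nhds 0)) : L1 = L2 := by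
  have h3 : Filter.Tendsto (fun N => v (a N - L1) + v (a N - L2)) Filter.atTop (nhds 0) := by
    simpa using h1.add h2
  have h4 : v (L1 - L2) ≤ 0 := by
    refine ge_of_tendsto h3 ?_
    filter_upwards with N
    calc v (L1 - L2) ≤ v (L1 - a N) + v (a N - L2) := v.sub_le _ _ _
    _ = v (a N - L1) + v (a N - L2) := by rw [v.map_sub]
  have h5 : v (L1 - L2) = 0 := le_antisymm h4 (v.nonneg _)
  exact sub_eq_zero.1 (v.eq_zero.1 h5)

section Key

variable (β : Kbinf Fq) (φ : Kbinf Fq →+* Kbinf Fq) (hφ : ∀ x, φ x = x ^ q Fq)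
  (hβ : β ^ (q Fq - 1) = - thetaB Fq)

lemma thetaB_ne_zero : thetaB Fq ≠ 0 := by
  have h1 : theta Fq ≠ 0 := by
    rw [theta]
    exact inv_ne_zero (HahnSeries.single_ne_zero one_ne_zero)
  intro h
  exact h1 ((algebraMap (Kinf Fq) (Kbinf Fq)).injective (by rw [← thetaB, h, map_zero]))

include hβ in
lemma beta_ne_zero : β ≠ 0 := by
  intro h
  have hq2 : 1 < q Fq := Fintype.one_lt_card
  have : (0 : Kbinf Fq) ^ (q Fq - 1) = - thetaB Fq := h ▸ hβ
  rw [zero_pow (by omega)] at this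
  exact thetaB_ne_zero (Fq := Fq) (by rw [← neg_neg (thetaB Fq), ← this, neg_zero])

include hφ hβ in
lemma key_identity (N : ℕ) :
    (PowerSeries.X - PowerSeries.C (thetaB Fq ^ q Fq)) *
      PowerSeries.map φ (OmegaPartial Fq β N) = OmegaPartial Fq β (N + 1) := by
  have hq2 : 1 < q Fq := Fintype.one_lt_card
  have hθ : thetaB Fq ≠ 0 := thetaB_ne_zero
  have hβ0 : β ≠ 0 := beta_ne_zero β hβ
  have hneg : (-1 : Kbinf Fq) ^ q Fq = -1 := by
    have := map_neg φ 1
    rw [hφ, map_one] at this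
    exact this
  -- `φ` applied to the leading constant
  have hc : φ ((β ^ q Fq)⁻¹) = -((β ^ q Fq)⁻¹ * (thetaB Fq ^ q Fq)⁻¹) := by
    rw [hφ, inv_pow]
    have h1 : (β ^ q Fq) ^ q Fq = -(thetaB Fq ^ q Fq * β ^ q Fq) := by
      calc (β ^ q Fq) ^ q Fq = (β ^ q Fq) ^ (q Fq - 1) * (β ^ q Fq) ^ 1 := by
            rw [← pow_add]; congr 1; omega
      _ = (β ^ (q Fq - 1)) ^ q Fq * β ^ q Fq := by rw [pow_right_comm, pow_one]
      _ = (-thetaB Fq) ^ q Fq * β ^ q Fq := by rw [hβ]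
      _ = -(thetaB Fq ^ q Fq * β ^ q Fq) := by
            rw [neg_pow, hneg]; ring
    rw [h1, inv_neg, mul_inv]
    ring
  -- `φ` applied to the factors
  have hexp : ∀ i : ℕ, φ ((thetaB Fq ^ q Fq ^ (i + 1))⁻¹) = (thetaB Fq ^ q Fq ^ (i + 2))⁻¹ := by
    intro i
    rw [hφ, ← inv_pow, ← pow_mul, ← pow_succ, inv_pow]
  -- push the map through the product
  have hmap : PowerSeries.map φ (OmegaPartial Fq β N) =
      PowerSeries.C (-((β ^ q Fq)⁻¹ * (thetaB Fq ^ q Fq)⁻¹)) *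
        ∏ i ∈ Finset.range N,
          (1 - PowerSeries.C ((thetaB Fq ^ q Fq ^ (i + 2))⁻¹) * PowerSeries.X) := by
    rw [OmegaPartial, map_mul, PowerSeries.map_C, hc, map_prod]
    congr 1
    refine Finset.prod_congr rfl fun i _ => ?_
    rw [map_sub, map_one, map_mul, PowerSeries.map_C, PowerSeries.map_X, hexp]
  rw [hmap, OmegaPartial, Finset.prod_range_succ']
  have hpow1 : q Fq ^ (0 + 1) = q Fq := by rw [zero_add, pow_one]
  rw [hpow1]
  have hCu : PowerSeries.C (thetaB Fq ^ q Fq) *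
      PowerSeries.C ((thetaB Fq ^ q Fq)⁻¹) = 1 := by
    rw [← map_mul, mul_inv_cancel₀ (pow_ne_zero _ hθ), map_one]
  rw [map_neg, map_mul]
  linear_combination (PowerSeries.C ((β ^ q Fq)⁻¹) *
    ∏ i ∈ Finset.range N,
      (1 - PowerSeries.C ((thetaB Fq ^ q Fq ^ (i + 2))⁻¹) * PowerSeries.X)) * hCu

end Key

end MZVAux

set_option synthInstance.maxHeartbeats 1000000
set_option maxHeartbeats 2000000

open MZV in
/-- The power series `Ω(t)` is transcendental over `K̄(t)`:
viewing `K̄(t)` as a subfield of the Laurent series field `K̄_∞((t))` (via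
Laurent expansion at `t = 0`), `Ω` is not a root of any nonzero polynomial
with coefficients in `K̄(t)`. -/
theorem statement13 (Fq : Type) [Field Fq] [Fintype Fq]
    -- `v` is the unique extension of the `∞`-adic absolute value to `K̄_∞`
    (v : AbsoluteValue (Kbinf Fq) ℝ)
    (hv : ∀ x : Kinf Fq, v (algebraMap (Kinf Fq) (Kbinf Fq) x) = absK Fq x)
    -- `β = (−θ)^{1/(q−1)}`, a fixed `(q−1)`-st root of `−θ` in `K̄_∞`
    (β : Kbinf Fq) (hβ : β ^ (q Fq - 1) = - thetaB Fq)
    -- `Ω`, the coefficientwise limit of the partial products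
    (Ω : PowerSeries (Kbinf Fq))
    (hΩ : ∀ k : ℕ, Tendsto
      (fun N => v (PowerSeries.coeff k (OmegaPartial Fq β N) -
        PowerSeries.coeff k Ω)) atTop (nhds 0)) :
    Transcendental ↥(KbarT Fq) ((HahnSeries.ofPowerSeries ℤ (Kbinf Fq)) Ω) := by
  obtain ⟨φ, hφ⟩ := MZVAux.exists_frob Fq
  have hq2 : 1 < q Fq := Fintype.one_lt_card
  have hqne : q Fq ≠ 0 := by omega
  have hθ : thetaB Fq ≠ 0 := MZVAux.thetaB_ne_zero
  have hβ0 : β ≠ 0 := MZVAux.beta_ne_zero β hβ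
  set θq : Kbinf Fq := thetaB Fq ^ q Fq with hθqdef
  have hθqne : θq ≠ 0 := pow_ne_zero _ hθ
  have huniq := MZVAux.v_lim_unique (Fq := Fq) v
  have vsub : ∀ a b : Kbinf Fq, v (a - b) ≤ v a + v b := fun a b => by
    have h := v.sub_le a 0 b
    rwa [sub_zero, zero_sub, v.map_neg] at h
  set W : PowerSeries (Kbinf Fq) :=
    PowerSeries.X - PowerSeries.C θq with hW
  have hcoeff : ∀ (g : PowerSeries (Kbinf Fq)) (j : ℕ),
      PowerSeries.coeff j (W * g) =
        (if j = 0 then 0 else PowerSeries.coeff (j - 1) g) -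
          θq * PowerSeries.coeff j g := by
    intro g j
    rw [hW, sub_mul, map_sub, PowerSeries.coeff_C_mul]
    congr 1
    cases j with
    | zero => simp
    | succ n =>
      rw [if_neg (Nat.succ_ne_zero n), PowerSeries.coeff_succ_X_mul]
      simp
  -- the functional equation Ω = (X - θ^q) · Ω^{(1)}
  have funeq : Ω = W * PowerSeries.map φ Ω := by
    ext k
    refine huniq (fun N => PowerSeries.coeff k (OmegaPartial Fq β (N + 1))) ?_ ?_
    · exact (hΩ k).comp (tendsto_add_atTop_nat 1)
    · have heq : ∀ N, PowerSeries.coeff k (OmegaPartial Fq β (N + 1)) -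
          PowerSeries.coeff k (W * PowerSeries.map φ Ω) =
          PowerSeries.coeff k
            (W * PowerSeries.map φ (OmegaPartial Fq β N - Ω)) := by
        intro N
        rw [← MZVAux.key_identity β φ hφ hβ N, map_sub (PowerSeries.map φ), mul_sub, map_sub]
      have hD : ∀ N (j : ℕ),
          v (PowerSeries.coeff j (PowerSeries.map φ (OmegaPartial Fq β N - Ω))) =
            v (PowerSeries.coeff j (OmegaPartial Fq β N) -
              PowerSeries.coeff j Ω) ^ q Fq := by
        intro N j
        rw [PowerSeries.coeff_map, map_sub, hφ, map_pow]
      have hb : ∀ N, v (PowerSeries.coeff k (OmegaPartial Fq β (N + 1)) -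
          PowerSeries.coeff k (W * PowerSeries.map φ Ω)) ≤
          v (PowerSeries.coeff (k - 1) (OmegaPartial Fq β N) -
              PowerSeries.coeff (k - 1) Ω) ^ q Fq +
            v θq * v (PowerSeries.coeff k (OmegaPartial Fq β N) -
              PowerSeries.coeff k Ω) ^ q Fq := by
        intro N
        rw [heq N, hcoeff]
        by_cases hk : k = 0
        · rw [if_pos hk, zero_sub, v.map_neg, v.map_mul, hD]
          exact le_add_of_nonneg_left (pow_nonneg (v.nonneg _) _)
        · rw [if_neg hk]
          calc v (PowerSeries.coeff (k - 1)
                (PowerSeries.map φ (OmegaPartial Fq β N - Ω)) -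
              θq * PowerSeries.coeff k
                (PowerSeries.map φ (OmegaPartial Fq β N - Ω))) ≤
              v (PowerSeries.coeff (k - 1)
                  (PowerSeries.map φ (OmegaPartial Fq β N - Ω))) +
                v (θq * PowerSeries.coeff k
                  (PowerSeries.map φ (OmegaPartial Fq β N - Ω))) := vsub _ _
          _ = _ := by rw [v.map_mul, hD, hD]
      have hBtend : Tendsto (fun N =>
          v (PowerSeries.coeff (k - 1) (OmegaPartial Fq β N) -
              PowerSeries.coeff (k - 1) Ω) ^ q Fq +
            v θq * v (PowerSeries.coeff k (OmegaPartial Fq β N) -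
              PowerSeries.coeff k Ω) ^ q Fq) atTop (nhds 0) := by
        have t1 := (hΩ (k - 1)).pow (q Fq)
        have t2 := ((hΩ k).pow (q Fq)).const_mul (v θq)
        rw [zero_pow hqne] at t1 t2
        rw [mul_zero] at t2
        simpa using t1.add t2
      exact squeeze_zero (fun N => v.nonneg _) hb hBtend
  -- the constant coefficient of Ω is nonzero
  have hc0 : ∀ N, PowerSeries.coeff 0 (OmegaPartial Fq β N) = (β ^ q Fq)⁻¹ := by
    intro N
    simp [OmegaPartial, PowerSeries.coeff_zero_eq_constantCoeff, map_prod]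
  have hcoeff0 : PowerSeries.coeff 0 Ω = (β ^ q Fq)⁻¹ := by
    refine (huniq (fun N => PowerSeries.coeff 0 (OmegaPartial Fq β N))
      (hΩ 0) ?_).symm.symm
    simp only [hc0, sub_self, v.map_zero]
    exact tendsto_const_nhds
  have hΩne : Ω ≠ 0 := by
    intro h
    rw [h, map_zero] at hcoeff0
    exact inv_ne_zero (pow_ne_zero _ hβ0) hcoeff0.symm
  -- move to Laurent series
  intro halg
  set L := LaurentSeries (Kbinf Fq)
  set τ := MZVAux.tauRH φ with hτ
  set ω : L := HahnSeries.ofPowerSeries ℤ (Kbinf Fq) Ω with hω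
  have hωne : ω ≠ 0 := by
    intro h
    apply hΩne
    apply HahnSeries.ofPowerSeries_injective (Γ := ℤ)
    rw [map_zero]
    exact h
  have hfun : ω = (HahnSeries.single (1 : ℤ) 1 - HahnSeries.C θq) * τ ω := by
    conv_lhs => rw [hω, funeq]
    rw [map_mul, map_sub, HahnSeries.ofPowerSeries_X, HahnSeries.ofPowerSeries_C, hτ,
      MZVAux.tauRH_ofPowerSeries]
  -- the minimal polynomial and its Frobenius twist
  have hint : IsIntegral (KbarT Fq) ω := halg.isIntegral
  set m := minpoly (KbarT Fq) ω with hm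
  have hd : 0 < m.natDegree := minpoly.natDegree_pos hint
  set σ : ↥(KbarT Fq) →+* ↥(KbarT Fq) :=
    RingHom.codRestrict (τ.comp (KbarT Fq).subtype) (KbarT Fq)
      (fun a => MZVAux.tau_mem_KbarT hφ a.2) with hσ
  have huT : (HahnSeries.single (1 : ℤ) (1 : Kbinf Fq) - HahnSeries.C θq) ∈ KbarT Fq :=
    sub_mem MZVAux.single_mem_KbarT
      (MZVAux.C_mem_KbarT (pow_mem (MZVAux.thetaB_mem_Kbar Fq) _))
  set u : ↥(KbarT Fq) := ⟨_, huT⟩ with hu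
  have hAu : algebraMap ↥(KbarT Fq) L u =
      HahnSeries.single (1 : ℤ) 1 - HahnSeries.C θq := rfl
  have h1 : Polynomial.aeval (τ ω) (m.map σ) = 0 := by
    rw [Polynomial.aeval_def, Polynomial.eval₂_map]
    have hcomp : (algebraMap ↥(KbarT Fq) L).comp σ = τ.comp (algebraMap ↥(KbarT Fq) L) := by
      ext a
      rfl
    rw [hcomp, ← Polynomial.hom_eval₂, ← Polynomial.aeval_def, minpoly.aeval, map_zero]
  have h2 : Polynomial.aeval ω ((m.map σ).scaleRoots u) = 0 := by
    have h3 := Polynomial.scaleRoots_aeval_eq_zero (r := u) h1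
    rwa [hAu, ← hfun] at h3
  have hmon : ((m.map σ).scaleRoots u).Monic :=
    (Polynomial.monic_scaleRoots_iff u).2 ((minpoly.monic hint).map σ)
  have hmm : (m.map σ).scaleRoots u = m := by
    refine minpoly.unique _ _ hmon h2 fun p hp hp0 => ?_
    have hdeg : ((m.map σ).scaleRoots u).natDegree = m.natDegree := by
      rw [Polynomial.natDegree_scaleRoots, Polynomial.natDegree_map]
    have hdann : ((m.map σ).scaleRoots u).degree = m.degree := by
      rw [Polynomial.degree_eq_natDegree hmon.ne_zero,
        Polynomial.degree_eq_natDegree (minpoly.ne_zero hint), hdeg]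
    rw [hdann]
    exact minpoly.min _ _ hp hp0
  -- extract the constant coefficient relation
  set a0 : ↥(KbarT Fq) := m.coeff 0 with ha0def
  have ha0 : a0 ≠ 0 := minpoly.coeff_zero_ne_zero hint hωne
  have hcoeff0m : σ a0 * u ^ m.natDegree = a0 := by
    have h4 := congrArg (fun p : Polynomial ↥(KbarT Fq) => p.coeff 0) hmm
    simp only [Polynomial.coeff_scaleRoots, Polynomial.coeff_map, Nat.sub_zero] at h4
    rw [Polynomial.natDegree_map] at h4
    exact h4
  have hL : τ (a0 : L) * (HahnSeries.single (1 : ℤ) 1 - HahnSeries.C θq) ^ m.natDegree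
      = (a0 : L) := by
    have h5 := congrArg ((KbarT Fq).subtype) hcoeff0m
    rw [map_mul, map_pow] at h5
    exact h5
  -- representation of `a0` as a quotient of polynomials, and degree count
  obtain ⟨P, Q, hQ, hPQ⟩ := MZVAux.mem_rep a0.2
  have hEne : ∀ R : Polynomial (Kbinf Fq), R ≠ 0 → MZVAux.EPoly Fq R ≠ 0 := fun R h h0 =>
    h (MZVAux.EPoly_injective (by rw [h0, map_zero]))
  have ha0L : (a0 : L) ≠ 0 := fun h => ha0 (by
    apply Subtype.ext
    exact h)
  have hP0 : P ≠ 0 := by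
    rintro rfl
    rw [map_zero, zero_div] at hPQ
    exact ha0L hPQ
  set w : Polynomial (Kbinf Fq) := Polynomial.X - Polynomial.C θq with hwdef
  have hEw : MZVAux.EPoly Fq w = HahnSeries.single (1 : ℤ) 1 - HahnSeries.C θq := by
    rw [hwdef, map_sub, MZVAux.EPoly_X, MZVAux.EPoly_C]
  have hτa0 : τ (a0 : L) = MZVAux.EPoly Fq (P.map φ) / MZVAux.EPoly Fq (Q.map φ) := by
    rw [hPQ, map_div₀, MZVAux.tauRH_EPoly, MZVAux.tauRH_EPoly]
  have hEQ : MZVAux.EPoly Fq Q ≠ 0 := hEne Q hQ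
  have hQφ : Q.map φ ≠ 0 := Polynomial.map_ne_zero hQ
  have hPφ : P.map φ ≠ 0 := Polynomial.map_ne_zero hP0
  have hEQφ : MZVAux.EPoly Fq (Q.map φ) ≠ 0 := hEne _ hQφ
  have hkey : MZVAux.EPoly Fq (P.map φ * w ^ m.natDegree * Q) =
      MZVAux.EPoly Fq (P * Q.map φ) := by
    rw [map_mul, map_mul, map_pow, hEw, map_mul]
    have h6 := hL
    rw [hτa0, hPQ] at h6
    field_simp at h6
    simp only [HahnSeries.C_apply] at h6 ⊢
    linear_combination h6
  have hpoly : P.map φ * w ^ m.natDegree * Q = P * Q.map φ := MZVAux.EPoly_injective hkey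
  have hw0 : w ≠ 0 := Polynomial.X_sub_C_ne_zero θq
  have hdeg2 := congrArg Polynomial.natDegree hpoly
  rw [Polynomial.natDegree_mul (mul_ne_zero hPφ (pow_ne_zero _ hw0)) hQ,
    Polynomial.natDegree_mul hPφ (pow_ne_zero _ hw0),
    Polynomial.natDegree_mul hP0 hQφ, Polynomial.natDegree_pow,
    Polynomial.natDegree_map, Polynomial.natDegree_map,
    Polynomial.natDegree_X_sub_C] at hdeg2
  omega
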